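/- Let G be a graph and H = G[V(G) - N[core(G)]]. A set S_H is a maximum stable set of H if and only if there exists a maximum stable set S_G of G with S_H = S_G ∩ V(H). -/
import Mathlib


open Finset

variable {V : Type*} [Fintype V] [DecidableEq V]

/-  A set of vertices is stable (independent) if no two of its vertices are adjacent. -/
def stable (G : SimpleGraph V) (S : Finset V) : Prop :=
  ∀ a ∈ S, ∀ b ∈ S, ¬ G.Adj a b

/-  The (open) neighborhood of a set of vertices. -/
open Classical in
noncomputable def nbhd (G : SimpleGraph V) (A : Finset V) : Finset V :=
  Finset.univ.filter fun v => ∃ a ∈ A, G.Adj a v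

/-  The stability number: maximum size of a stable set. -/
open Classical in
noncomputable def alpha (G : SimpleGraph V) : ℕ :=
  Finset.univ.sup fun S : Finset V => if stable G S then S.card else 0

/-  A maximum stable set. -/
def maxStable (G : SimpleGraph V) (S : Finset V) : Prop :=
  stable G S ∧ S.card = alpha G

/-  core(G): the intersection of all maximum stable sets. -/
open Classical in
noncomputable def core (G : SimpleGraph V) : Finset V :=
  Finset.univ.filter fun v => ∀ S : Finset V, maxStable G S → v ∈ S

/-  A vertex is isolated if it has no neighbors. -/
def isolated (G : SimpleGraph V) (v : V) : Prop := ∀ w, ¬ G.Adj v w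

/-  The set of isolated vertices. -/
open Classical in
noncomputable def isol (G : SimpleGraph V) : Finset V :=
  Finset.univ.filter fun v => isolated G v

set_option linter.unusedSectionVars false

lemma stable_card_le (G : SimpleGraph V) {S : Finset V} (hS : stable G S) :
    S.card ≤ alpha G := by
  classical
  have := Finset.le_sup (f := fun S : Finset V => if stable G S then S.card else 0)
    (Finset.mem_univ S)
  simpa [alpha, hS] using this

lemma exists_maxStable (G : SimpleGraph V) : ∃ S, maxStable G S := by
  classical
  obtain ⟨S, -, hS⟩ := Finset.exists_mem_eq_sup (Finset.univ : Finset (Finset V))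
    ⟨∅, mem_univ _⟩ (fun S => if stable G S then S.card else 0)
  by_cases h : stable G S
  · exact ⟨S, h, by rw [alpha, hS, if_pos h]⟩
  · refine ⟨∅, fun a ha => by simp at ha, ?_⟩
    rw [alpha, hS, if_neg h]
    simp

lemma core_subset (G : SimpleGraph V) {S : Finset V} (hS : maxStable G S) :
    core G ⊆ S := fun v hv => by
  simp only [core, mem_filter] at hv
  exact hv.2 S hS

lemma stable_subset (G : SimpleGraph V) {S T : Finset V} (hS : stable G S) (h : T ⊆ S) :
    stable G T := fun a ha b hb => hS a (h ha) b (h hb)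

lemma core_stable (G : SimpleGraph V) : stable G (core G) := by
  obtain ⟨S, hS⟩ := exists_maxStable G
  exact stable_subset G hS.1 (core_subset G hS)

lemma nbhd_notMem (G : SimpleGraph V) {S : Finset V} (hS : maxStable G S)
    {v : V} (hv : v ∈ nbhd G (core G)) : v ∉ S := by
  simp only [nbhd, mem_filter] at hv
  obtain ⟨-, a, ha, hadj⟩ := hv
  intro hvS
  exact hS.1 a (core_subset G hS ha) v hvS hadj


section Main
variable (G : SimpleGraph V)

local notation "p" => fun x : V => x ∉ core G ∪ nbhd G (core G)

lemma filter_trace {S : Finset V} (hS : maxStable G S) :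
    S.filter (fun x : V => x ∉ core G ∪ nbhd G (core G)) = S \ core G := by
  ext v
  simp only [mem_filter, mem_sdiff, mem_union, not_or]
  constructor
  · rintro ⟨hv, h1, -⟩; exact ⟨hv, h1⟩
  · rintro ⟨hv, h1⟩
    exact ⟨hv, h1, fun hn => nbhd_notMem G hS hn hv⟩

lemma card_trace {S : Finset V} (hS : maxStable G S) :
    (S.filter (fun x : V => x ∉ core G ∪ nbhd G (core G))).card + (core G).card
      = alpha G := by
  rw [filter_trace G hS, card_sdiff_of_subset (core_subset G hS), hS.2]
  have : (core G).card ≤ alpha G := hS.2 ▸ card_le_card (core_subset G hS)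
  omega

lemma stable_comap_iff (T : Finset {x : V // x ∉ core G ∪ nbhd G (core G)}) :
    stable (SimpleGraph.comap (Subtype.val : _ → V) G) T ↔
      stable G (T.map (Function.Embedding.subtype _)) := by
  constructor
  · intro h a ha b hb
    simp only [mem_map, Function.Embedding.coe_subtype] at ha hb
    obtain ⟨a', ha', rfl⟩ := ha
    obtain ⟨b', hb', rfl⟩ := hb
    exact h a' ha' b' hb'
  · intro h a ha b hb
    exact h a.val (mem_map_of_mem _ ha) b.val (mem_map_of_mem _ hb)

lemma stable_union {T : Finset {x : V // x ∉ core G ∪ nbhd G (core G)}}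
    (hT : stable (SimpleGraph.comap (Subtype.val : _ → V) G) T) :
    stable G (core G ∪ T.map (Function.Embedding.subtype _)) := by
  have hT' := (stable_comap_iff G T).1 hT
  intro a ha b hb
  have hnadj : ∀ c ∈ core G, ∀ d ∈ T.map (Function.Embedding.subtype _), ¬ G.Adj c d := by
    intro c hc d hd hadj
    simp only [mem_map, Function.Embedding.coe_subtype] at hd
    obtain ⟨d', hd', rfl⟩ := hd
    have := d'.2
    simp only [mem_union, not_or, nbhd, mem_filter] at this
    exact this.2 ⟨mem_univ _, c, hc, hadj⟩
  rw [mem_union] at ha hb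
  rcases ha with ha | ha <;> rcases hb with hb | hb
  · exact core_stable G a ha b hb
  · exact hnadj a ha b hb
  · exact fun hadj => hnadj b hb a ha hadj.symm
  · exact hT' a ha b hb

lemma disj_core_map (T : Finset {x : V // x ∉ core G ∪ nbhd G (core G)}) :
    Disjoint (core G) (T.map (Function.Embedding.subtype _)) := by
  rw [Finset.disjoint_left]
  intro v hv hm
  simp only [mem_map, Function.Embedding.coe_subtype] at hm
  obtain ⟨v', -, rfl⟩ := hm
  exact v'.2 (mem_union_left _ hv)

lemma alpha_comap :
    alpha (SimpleGraph.comap (Subtype.val : {x : V // x ∉ core G ∪ nbhd G (core G)} → V) G)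
      + (core G).card = alpha G := by
  apply le_antisymm
  · obtain ⟨T, hT⟩ := exists_maxStable
      (SimpleGraph.comap (Subtype.val : {x : V // x ∉ core G ∪ nbhd G (core G)} → V) G)
    have hst := stable_union G hT.1
    have hcard := stable_card_le G hst
    rw [card_union_of_disjoint (disj_core_map G T), card_map] at hcard
    have := hT.2
    omega
  · obtain ⟨S, hS⟩ := exists_maxStable G
    have h1 : stable (SimpleGraph.comap (Subtype.val : _ → V) G)
        (S.subtype (fun x : V => x ∉ core G ∪ nbhd G (core G))) := by
      intro a ha b hb
      rw [Finset.mem_subtype] at ha hb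
      exact hS.1 a.val ha b.val hb
    have h2 := stable_card_le _ h1
    rw [Finset.card_subtype] at h2
    have := card_trace G hS
    omega
end Main

/-  For H = G[V(G) - N[core(G)]], a set is a maximum stable set of H iff it is the trace
on V(H) of some maximum stable set of G. -/
theorem stmt12 (G : SimpleGraph V)
    (S_H : Finset {x : V // x ∉ core G ∪ nbhd G (core G)}) :
    maxStable (SimpleGraph.comap
        (Subtype.val : {x : V // x ∉ core G ∪ nbhd G (core G)} → V) G) S_H ↔
      ∃ S_G : Finset V, maxStable G S_G ∧
        S_H = S_G.subtype (fun x => x ∉ core G ∪ nbhd G (core G)) := by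
  constructor
  · intro hH
    refine ⟨core G ∪ S_H.map (Function.Embedding.subtype _), ⟨stable_union G hH.1, ?_⟩, ?_⟩
    · rw [card_union_of_disjoint (disj_core_map G S_H), card_map, hH.2]
      have := alpha_comap G
      omega
    · ext a
      rw [Finset.mem_subtype, mem_union]
      simp only [mem_map, Function.Embedding.coe_subtype]
      constructor
      · intro ha
        exact Or.inr ⟨a, ha, rfl⟩
      · rintro (ha | ⟨b, hb, hba⟩)
        · exact absurd (mem_union_left _ ha) a.2
        · rwa [← Subtype.ext hba]
  · rintro ⟨S_G, hS, rfl⟩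
    constructor
    · intro a ha b hb
      rw [Finset.mem_subtype] at ha hb
      exact hS.1 a.val ha b.val hb
    · rw [Finset.card_subtype]
      have h1 := card_trace G hS
      have h2 := alpha_comap G
      omega
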